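/- There exists a constant C > 0 such that for all ε ∈ (0,1) the discrete inner boundary satisfies #∂Ω_ε ≤ C ε^{1−d}. -/

import Mathlib

open scoped Classical MeasureTheory
open Filter MeasureTheory Set
open scoped ENNReal NNReal

noncomputable section

/-- A bounded Lipschitz domain in `ℝ^d` containing locally, near every boundary point and
up to an isometry of `ℝ^d`, the open region strictly above the graph of a Lipschitz function. -/
def IsLipschitzDomain (d : ℕ) (Ω : Set (EuclideanSpace ℝ (Fin d))) : Prop :=
  IsOpen Ω ∧ IsConnected Ω ∧ Bornology.IsBounded Ω ∧
    ∀ p ∈ frontier Ω, ∃ U ∈ nhds p,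
      ∃ (φ : EuclideanSpace ℝ (Fin d) ≃ᵢ EuclideanSpace ℝ (Fin d)) (j : Fin d)
        (L : NNReal) (g : (Fin d → ℝ) → ℝ),
        LipschitzWith L g ∧
          ∀ x ∈ U, (x ∈ Ω ↔ g (fun i => if i = j then 0 else φ x i) < φ x j)

/-- The points of the rescaled lattice `εℤ^d`. -/
def latticePts (d : ℕ) (ε : ℝ) : Set (EuclideanSpace ℝ (Fin d)) :=
  {x | ∀ i, ∃ n : ℤ, x i = n * ε}

/-- The union of all closed segments joining nearest-neighbour points of `εℤ^d`. -/
def gridSet (d : ℕ) (ε : ℝ) : Set (EuclideanSpace ℝ (Fin d)) :=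
  ⋃ x ∈ latticePts d ε, ⋃ y ∈ latticePts d ε, ⋃ (_ : dist x y = ε), segment ℝ x y

/-- The discrete domain `Ω_ε`. -/
def discDomain {d : ℕ} (Ω : Set (EuclideanSpace ℝ (Fin d))) (ε : ℝ) :
    Set (EuclideanSpace ℝ (Fin d)) :=
  connectedComponentIn (Ω ∩ gridSet d ε) 0 ∩ latticePts d ε

/-- The discrete inner boundary `∂Ω_ε`. -/
def innerBdry {d : ℕ} (Ω : Set (EuclideanSpace ℝ (Fin d))) (ε : ℝ) :
    Set (EuclideanSpace ℝ (Fin d)) :=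
  {x ∈ discDomain Ω ε | ({y ∈ discDomain Ω ε | dist x y = ε}).ncard < 2 * d}

lemma coord_dist_le {d : ℕ} (x y : EuclideanSpace ℝ (Fin d)) (i : Fin d) :
    dist (x i) (y i) ≤ dist x y := by
  rw [EuclideanSpace.dist_eq]
  have h1 : dist (x i) (y i) = Real.sqrt (dist (x i) (y i) ^ 2) := by
    rw [Real.sqrt_sq dist_nonneg]
  rw [h1]
  apply Real.sqrt_le_sqrt
  exact Finset.single_le_sum (f := fun i => dist (x i) (y i) ^ 2)
    (fun j _ => sq_nonneg _) (Finset.mem_univ i)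

lemma lattice_sep {d : ℕ} {ε : ℝ} (hε : 0 < ε) {x y : EuclideanSpace ℝ (Fin d)}
    (hx : x ∈ latticePts d ε) (hy : y ∈ latticePts d ε) (hxy : x ≠ y) : ε ≤ dist x y := by
  have : ∃ i, x i ≠ y i := by
    by_contra h
    push_neg at h
    exact hxy (PiLp.ext h)
  obtain ⟨i, hi⟩ := this
  obtain ⟨n, hn⟩ := hx i
  obtain ⟨m, hm⟩ := hy i
  have h1 : dist (x i) (y i) = |(n - m : ℤ)| * ε := by
    rw [Real.dist_eq, hn, hm, ← sub_mul, abs_mul, abs_of_pos hε]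
    push_cast
    ring
  have h2 : (1 : ℝ) ≤ |(n - m : ℤ)| := by
    have hnm : n ≠ m := by
      intro h
      apply hi
      rw [hn, hm, h]
    have : 1 ≤ |n - m| := Int.one_le_abs (by omega)
    exact_mod_cast this
  calc ε = 1 * ε := (one_mul ε).symm
    _ ≤ |(n - m : ℤ)| * ε := by nlinarith
    _ = dist (x i) (y i) := h1.symm
    _ ≤ dist x y := coord_dist_le x y i

lemma lattice_nbr_char {d : ℕ} {ε : ℝ} (hε : 0 < ε) {x y : EuclideanSpace ℝ (Fin d)}
    (hx : x ∈ latticePts d ε) (hy : y ∈ latticePts d ε) (hxy : dist x y = ε) :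
    ∃ i : Fin d, y = x + EuclideanSpace.single i ε ∨ y = x + EuclideanSpace.single i (-ε) := by
  have hκ : ∀ i, ∃ k : ℤ, y i - x i = k * ε := by
    intro i
    obtain ⟨n, hn⟩ := hx i
    obtain ⟨m, hm⟩ := hy i
    exact ⟨m - n, by rw [hn, hm]; push_cast; ring⟩
  choose κ hκ using hκ
  have hsum : ∑ i, ((κ i : ℝ) * ε) ^ 2 = ε ^ 2 := by
    have h1 : dist x y ^ 2 = ∑ i, dist (x i) (y i) ^ 2 := by
      rw [EuclideanSpace.dist_eq, Real.sq_sqrt]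
      exact Finset.sum_nonneg fun j _ => sq_nonneg _
    rw [hxy] at h1
    rw [h1]
    apply Finset.sum_congr rfl
    intro i _
    rw [Real.dist_eq, sq_abs]
    have h9 : x i - y i = -((κ i : ℝ) * ε) := by linarith [hκ i]
    rw [h9]
    ring
  have hsumZ : ∑ i, (κ i) ^ 2 = 1 := by
    have hε2 : ε ^ 2 ≠ 0 := by positivity
    have h2 : ((∑ i, κ i ^ 2 : ℤ) : ℝ) * ε ^ 2 = 1 * ε ^ 2 := by
      push_cast
      calc (∑ i, ((κ i : ℝ) ^ 2)) * ε ^ 2 = ∑ i, ((κ i : ℝ) * ε) ^ 2 := by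
            rw [Finset.sum_mul]; apply Finset.sum_congr rfl; intro i _; ring
        _ = ε ^ 2 := hsum
        _ = 1 * ε ^ 2 := (one_mul _).symm
    have h3 := mul_right_cancel₀ hε2 h2
    exact_mod_cast h3
  have : ∃ i, κ i ≠ 0 := by
    by_contra h
    push_neg at h
    have h0 : ∑ i, (κ i) ^ 2 = 0 := Finset.sum_eq_zero fun i _ => by rw [h i]; ring
    omega
  obtain ⟨i, hi⟩ := this
  have h1 : 1 ≤ κ i ^ 2 := by nlinarith [Int.one_le_abs hi, abs_nonneg (κ i), sq_abs (κ i)]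
  have hrest : ∀ j, j ≠ i → κ j = 0 := by
    intro j hj
    by_contra hjne
    have h2 : 1 ≤ κ j ^ 2 := by nlinarith [Int.one_le_abs hjne, abs_nonneg (κ j), sq_abs (κ j)]
    have h4 : κ j ^ 2 ≤ ∑ l ∈ Finset.univ.erase i, κ l ^ 2 :=
      Finset.single_le_sum (f := fun l => κ l ^ 2) (fun l _ => sq_nonneg _)
        (Finset.mem_erase.mpr ⟨hj, Finset.mem_univ j⟩)
    have h5 : κ i ^ 2 + ∑ l ∈ Finset.univ.erase i, κ l ^ 2 = ∑ l, κ l ^ 2 :=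
      Finset.add_sum_erase Finset.univ (fun l => κ l ^ 2) (Finset.mem_univ i)
    linarith
  have hκi : κ i = 1 ∨ κ i = -1 := by
    have h5 : κ i ^ 2 ≤ 1 := by
      have h6 : κ i ^ 2 ≤ ∑ l, κ l ^ 2 :=
        Finset.single_le_sum (f := fun l => κ l ^ 2) (fun l _ => sq_nonneg _)
          (Finset.mem_univ i)
      omega
    have h6 : κ i ^ 2 = 1 := le_antisymm h5 h1
    have h7 : (κ i - 1) * (κ i + 1) = 0 := by nlinarith
    rcases mul_eq_zero.mp h7 with h | h
    · left; omega
    · right; omega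
  refine ⟨i, ?_⟩
  have hyx : y = x + EuclideanSpace.single i ((κ i : ℝ) * ε) := by
    apply PiLp.ext
    intro j
    have heq : (x + EuclideanSpace.single i ((κ i : ℝ) * ε)) j
        = x j + EuclideanSpace.single i ((κ i : ℝ) * ε) j := rfl
    rw [heq, EuclideanSpace.single_apply]
    split_ifs with hc
    · subst hc
      linarith [hκ j]
    · have h8 := hκ j
      rw [hrest j hc] at h8
      push_cast at h8
      linarith
  rcases hκi with h | h
  · left; rw [hyx, h]; norm_num
  · right; rw [hyx, h]; norm_num


-- frontier crossing for preconnected sets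
lemma preconn_frontier {X : Type*} [TopologicalSpace X] {s Ω : Set X} (hs : IsPreconnected s)
    (hΩ : IsOpen Ω) {a b : X} (ha : a ∈ s) (haΩ : a ∈ Ω) (hb : b ∈ s) (hbΩ : b ∉ Ω) :
    (s ∩ frontier Ω).Nonempty := by
  by_contra h
  rw [Set.not_nonempty_iff_eq_empty] at h
  have hsub : s ⊆ Ω ∪ (closure Ω)ᶜ := by
    intro z hz
    by_cases hz1 : z ∈ closure Ω
    · left
      have : z ∉ frontier Ω := fun hf => (Set.eq_empty_iff_forall_notMem.mp h z) ⟨hz, hf⟩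
      rw [frontier, hΩ.interior_eq] at this
      by_contra hzΩ
      exact this ⟨hz1, hzΩ⟩
    · right; exact hz1
  have hb' : b ∈ (closure Ω)ᶜ := by
    intro hb1
    have : b ∉ frontier Ω := fun hf => (Set.eq_empty_iff_forall_notMem.mp h b) ⟨hb, hf⟩
    rw [frontier, hΩ.interior_eq] at this
    exact this ⟨hb1, hbΩ⟩
  obtain ⟨z, hz, hz1, hz2⟩ := hs Ω (closure Ω)ᶜ hΩ isClosed_closure.isOpen_compl hsub
    ⟨a, ha, haΩ⟩ ⟨b, hb, hb'⟩
  exact hz2 (subset_closure hz1)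



lemma single_mem_lattice {d : ℕ} {ε : ℝ} {x : EuclideanSpace ℝ (Fin d)}
    (hx : x ∈ latticePts d ε) (i : Fin d) (k : ℤ) :
    x + EuclideanSpace.single i ((k : ℝ) * ε) ∈ latticePts d ε := by
  intro j
  obtain ⟨n, hn⟩ := hx j
  have heq : (x + EuclideanSpace.single i ((k : ℝ) * ε)) j
      = x j + EuclideanSpace.single i ((k : ℝ) * ε) j := rfl
  rw [heq, EuclideanSpace.single_apply]
  split_ifs with hc
  · exact ⟨n + k, by rw [hn]; push_cast; ring⟩
  · exact ⟨n, by rw [hn]; ring⟩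

lemma dist_single {d : ℕ} (x : EuclideanSpace ℝ (Fin d)) (i : Fin d) (c : ℝ) :
    dist x (x + EuclideanSpace.single i c) = |c| := by
  rw [dist_self_add_right, EuclideanSpace.norm_single, Real.norm_eq_abs]

lemma missing_nbr {d : ℕ} {ε : ℝ} {Ω : Set (EuclideanSpace ℝ (Fin d))} (hε : 0 < ε)
    {x : EuclideanSpace ℝ (Fin d)} (hx : x ∈ innerBdry Ω ε) :
    ∃ y ∈ latticePts d ε, dist x y = ε ∧ y ∉ discDomain Ω ε := by
  obtain ⟨hxd, hcard⟩ := hx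
  by_contra h
  push_neg at h
  have hx_lat : x ∈ latticePts d ε := hxd.2
  set f : Fin d × Bool → EuclideanSpace ℝ (Fin d) :=
    fun p => x + EuclideanSpace.single p.1 (if p.2 then ε else -ε) with hf
  have hd : ∀ p : Fin d × Bool, dist x (f p) = ε := by
    intro p
    rw [hf]
    simp only
    rw [dist_single]
    rcases p.2 with _ | _ <;>
      simp [abs_of_pos hε, abs_of_neg (neg_neg_iff_pos.mpr hε), abs_of_pos]
  have hlat : ∀ p : Fin d × Bool, f p ∈ latticePts d ε := by
    intro ⟨i, b⟩
    rcases b with _ | _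
    · have := single_mem_lattice hx_lat i (-1)
      simpa [hf] using this
    · have := single_mem_lattice hx_lat i 1
      simpa [hf] using this
  have hrange : {y ∈ discDomain Ω ε | dist x y = ε} = Set.range f := by
    ext y
    constructor
    · rintro ⟨hyd, hdist⟩
      obtain ⟨i, hcase | hcase⟩ := lattice_nbr_char hε hx_lat hyd.2 hdist
      · exact ⟨(i, true), by rw [hf]; simp [hcase]⟩
      · exact ⟨(i, false), by rw [hf]; simp [hcase]⟩
    · rintro ⟨p, rfl⟩
      exact ⟨h _ (hlat p) (hd p), hd p⟩
  have hinj : Function.Injective f := by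
    rintro ⟨i, b⟩ ⟨i', b'⟩ hpq
    simp only [hf] at hpq
    have h2 : EuclideanSpace.single i (if b then ε else -ε)
        = EuclideanSpace.single i' (if b' then ε else -ε) := by
      have := add_left_cancel hpq
      exact this
    have hii' : i = i' := by
      by_contra hne
      have h3 := congrFun (congrArg (fun v : EuclideanSpace ℝ (Fin d) => (v : Fin d → ℝ)) h2) i
      simp only [EuclideanSpace.single_apply, if_pos rfl, if_neg hne] at h3
      rcases b with _ | _ <;> simp at h3 <;> linarith
    subst hii'
    have h3 := congrFun (congrArg (fun v : EuclideanSpace ℝ (Fin d) => (v : Fin d → ℝ)) h2) i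
    simp only [EuclideanSpace.single_apply, if_pos rfl] at h3
    rcases b with _ | _ <;> rcases b' with _ | _ <;> simp at h3 ⊢ <;> linarith
  have hcard2 : {y ∈ discDomain Ω ε | dist x y = ε}.ncard = 2 * d := by
    rw [hrange, ← Set.image_univ, Set.ncard_image_of_injective _ hinj, Set.ncard_univ]
    simp [Nat.card_eq_fintype_card]
    ring
  omega

lemma innerBdry_near_frontier {d : ℕ} {ε : ℝ} {Ω : Set (EuclideanSpace ℝ (Fin d))}
    (hΩo : IsOpen Ω) (hε : 0 < ε) {x : EuclideanSpace ℝ (Fin d)} (hx : x ∈ innerBdry Ω ε) :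
    Metric.infDist x (frontier Ω) ≤ ε := by
  obtain ⟨y, hy_lat, hy_dist, hy_not⟩ := missing_nbr hε hx
  obtain ⟨hxc, hx_lat⟩ := hx.1
  have hxΩ : x ∈ Ω := ((connectedComponentIn_subset _ _) hxc).1
  have hseg_grid : segment ℝ x y ⊆ gridSet d ε := by
    intro z hz
    rw [gridSet]
    rw [Set.mem_iUnion₂]
    exact ⟨x, hx_lat, Set.mem_iUnion₂.mpr ⟨y, hy_lat, Set.mem_iUnion.mpr ⟨hy_dist, hz⟩⟩⟩
  have hcross : ∃ z ∈ segment ℝ x y, z ∉ Ω := by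
    by_contra hc
    push_neg at hc
    have hsub : segment ℝ x y ⊆ Ω ∩ gridSet d ε := fun z hz => ⟨hc z hz, hseg_grid hz⟩
    have hcc : segment ℝ x y ⊆ connectedComponentIn (Ω ∩ gridSet d ε) x :=
      (convex_segment x y).isPreconnected.subset_connectedComponentIn
        (left_mem_segment ℝ x y) hsub
    have heq : connectedComponentIn (Ω ∩ gridSet d ε) 0 =
        connectedComponentIn (Ω ∩ gridSet d ε) x := connectedComponentIn_eq hxc
    exact hy_not ⟨heq ▸ hcc (right_mem_segment ℝ x y), hy_lat⟩
  obtain ⟨z, hzseg, hzΩ⟩ := hcross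
  obtain ⟨w, hwseg, hwf⟩ := preconn_frontier (convex_segment x y).isPreconnected hΩo
    (left_mem_segment ℝ x y) hxΩ hzseg hzΩ
  have hdw : dist x w ≤ ε := by
    have hsub : segment ℝ x y ⊆ Metric.closedBall x ε := by
      apply (convex_closedBall x ε).segment_subset
      · exact Metric.mem_closedBall_self hε.le
      · rw [Metric.mem_closedBall, dist_comm]; exact hy_dist.le
    have := hsub hwseg
    rw [Metric.mem_closedBall] at this
    rwa [dist_comm] at this
  exact le_trans (Metric.infDist_le_dist_of_mem hwf) hdw


lemma isometry_measurePreserving {d : ℕ}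
    (f : EuclideanSpace ℝ (Fin d) ≃ᵢ EuclideanSpace ℝ (Fin d)) :
    MeasurePreserving f volume volume := by
  have h : ⇑f = fun x => f.toRealLinearIsometryEquiv x + f 0 := by
    funext x
    simp [IsometryEquiv.toRealLinearIsometryEquiv_apply]
  rw [h]
  exact (measurePreserving_add_right volume (f 0)).comp
    f.toRealLinearIsometryEquiv.measurePreserving

lemma tube_volume {n : ℕ} (j : Fin (n+1)) (L : NNReal) (g : (Fin (n+1) → ℝ) → ℝ)
    (hg : LipschitzWith L g)
    (φ : EuclideanSpace ℝ (Fin (n+1)) ≃ᵢ EuclideanSpace ℝ (Fin (n+1)))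
    (q : EuclideanSpace ℝ (Fin (n+1))) (r a : ℝ) :
    volume {z : EuclideanSpace ℝ (Fin (n+1)) |
        dist z q ≤ r ∧ |φ z j - g (fun i => if i = j then 0 else φ z i)| ≤ a}
      ≤ ENNReal.ofReal (2*a) * ENNReal.ofReal (2*r) ^ n := by
  set c : EuclideanSpace ℝ (Fin (n+1)) := φ q with hc
  set G : (Fin n → ℝ) → ℝ := fun v => g (j.insertNth 0 v) with hG
  have hGcont : Continuous G := by
    apply hg.continuous.comp
    exact (continuous_const (y := (0:ℝ))).finInsertNth j continuous_id
  -- the target set in the product space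
  set B : Set (ℝ × (Fin n → ℝ)) :=
    {p | (p.2 ∈ Set.pi Set.univ fun i => Icc (c (j.succAbove i) - r) (c (j.succAbove i) + r))
      ∧ |p.1 - G p.2| ≤ a} with hB
  have hBm : MeasurableSet B := by
    apply MeasurableSet.inter
    · exact measurable_snd (MeasurableSet.univ_pi fun i => measurableSet_Icc)
    · have : Measurable fun p : ℝ × (Fin n → ℝ) => |p.1 - G p.2| :=
        (measurable_fst.sub (hGcont.measurable.comp measurable_snd)).abs
      exact this measurableSet_Iic
  -- the target set in pi space
  set π : (Fin (n+1) → ℝ) ≃ᵐ ℝ × (Fin n → ℝ) := MeasurableEquiv.piFinSuccAbove (fun _ => ℝ) j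
  set A : Set (Fin (n+1) → ℝ) := π ⁻¹' B with hA
  have hAm : MeasurableSet A := π.measurable hBm
  -- the target set in Euclidean space
  set e := (MeasurableEquiv.toLp 2 (Fin (n+1) → ℝ)).symm
  set S : Set (EuclideanSpace ℝ (Fin (n+1))) := e ⁻¹' A with hS
  have hSm : MeasurableSet S := e.measurable hAm
  -- inclusion
  have hsub : {z : EuclideanSpace ℝ (Fin (n+1)) |
      dist z q ≤ r ∧ |φ z j - g (fun i => if i = j then 0 else φ z i)| ≤ a} ⊆ φ ⁻¹' S := by
    intro z ⟨hz1, hz2⟩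
    have hcoord : ∀ i, |φ z i - c i| ≤ r := by
      intro i
      calc |φ z i - c i| = dist (φ z i) (φ q i) := (Real.dist_eq _ _).symm
        _ ≤ dist (φ z) (φ q) := coord_dist_le _ _ _
        _ = dist z q := φ.dist_eq z q
        _ ≤ r := hz1
    show e (φ z) ∈ A
    show π (e (φ z)) ∈ B
    have hπ : π (e (φ z)) = (φ z j, fun i => φ z (j.succAbove i)) := rfl
    rw [hπ]
    constructor
    · intro i _
      have := hcoord (j.succAbove i)
      rw [Set.mem_Icc]
      constructor <;> [linarith [abs_le.mp this |>.1]; linarith [abs_le.mp this |>.2]]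
    · have hins : (fun i => if i = j then 0 else φ z i)
          = j.insertNth 0 (fun i => φ z (j.succAbove i)) := by
        funext i
        rcases eq_or_ne i j with rfl | hne
        · simp [Fin.insertNth_apply_same]
        · obtain ⟨k, rfl⟩ := Fin.exists_succAbove_eq hne
          rw [Fin.insertNth_apply_succAbove]
          simp [Fin.succAbove_ne j k]
      simp only [hG]
      rw [← hins]
      exact hz2
  -- volume computations
  calc volume {z : EuclideanSpace ℝ (Fin (n+1)) |
        dist z q ≤ r ∧ |φ z j - g (fun i => if i = j then 0 else φ z i)| ≤ a}
      ≤ volume (φ ⁻¹' S) := measure_mono hsub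
    _ = volume S := (isometry_measurePreserving φ).measure_preimage hSm.nullMeasurableSet
    _ = volume A := (EuclideanSpace.volume_preserving_symm_measurableEquiv_toLp
        (Fin (n+1))).measure_preimage hAm.nullMeasurableSet
    _ = volume B := (volume_preserving_piFinSuccAbove (fun _ : Fin (n+1) => ℝ) j).measure_preimage
        hBm.nullMeasurableSet
    _ ≤ ENNReal.ofReal (2*a) * ENNReal.ofReal (2*r) ^ n := by
        rw [Measure.volume_eq_prod, Measure.prod_apply_symm hBm]
        have hbound : ∀ v : Fin n → ℝ,
            volume ((fun t => (t, v)) ⁻¹' B)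
              ≤ (Set.pi Set.univ fun i =>
                  Icc (c (j.succAbove i) - r) (c (j.succAbove i) + r)).indicator
                  (fun _ => ENNReal.ofReal (2*a)) v := by
          intro v
          by_cases hv : v ∈ Set.pi Set.univ fun i =>
              Icc (c (j.succAbove i) - r) (c (j.succAbove i) + r)
          · rw [Set.indicator_of_mem hv]
            have : (fun t => (t, v)) ⁻¹' B ⊆ Icc (G v - a) (G v + a) := by
              intro t ⟨_, ht⟩
              rw [Set.mem_Icc]
              constructor <;> [linarith [abs_le.mp ht |>.1]; linarith [abs_le.mp ht |>.2]]
            calc volume ((fun t => (t, v)) ⁻¹' B) ≤ volume (Icc (G v - a) (G v + a)) :=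
                  measure_mono this
              _ = ENNReal.ofReal (2*a) := by rw [Real.volume_Icc]; ring_nf
          · rw [Set.indicator_of_notMem hv]
            have : (fun t => (t, v)) ⁻¹' B = ∅ := by
              ext t
              simp only [Set.mem_preimage, Set.mem_empty_iff_false, iff_false]
              intro ⟨h1, _⟩
              exact hv h1
            rw [this]
            simp
        calc (∫⁻ v, volume ((fun t => (t, v)) ⁻¹' B)) ≤
            ∫⁻ v, (Set.pi Set.univ fun i =>
                Icc (c (j.succAbove i) - r) (c (j.succAbove i) + r)).indicator
                (fun _ => ENNReal.ofReal (2*a)) v := lintegral_mono hbound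
          _ = ENNReal.ofReal (2*a) * volume (Set.pi Set.univ fun i =>
                Icc (c (j.succAbove i) - r) (c (j.succAbove i) + r)) := by
              rw [lintegral_indicator (MeasurableSet.univ_pi fun i => measurableSet_Icc)]
              simp [mul_comm]
          _ ≤ ENNReal.ofReal (2*a) * ENNReal.ofReal (2*r) ^ n := by
              apply mul_le_mul_right
              rw [volume_pi_pi]
              apply le_of_eq
              calc ∏ i : Fin n, volume (Icc (c (j.succAbove i) - r) (c (j.succAbove i) + r))
                  = ∏ i : Fin n, ENNReal.ofReal (2*r) := by
                    apply Finset.prod_congr rfl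
                    intro i _
                    rw [Real.volume_Icc]
                    ring_nf
                _ = ENNReal.ofReal (2*r) ^ n := by
                    rw [Finset.prod_const, Finset.card_univ, Fintype.card_fin]


lemma frontier_graph_eq {d : ℕ} {Ω V : Set (EuclideanSpace ℝ (Fin d))} (hΩo : IsOpen Ω)
    (hV : IsOpen V) {φ : EuclideanSpace ℝ (Fin d) ≃ᵢ EuclideanSpace ℝ (Fin d)} {j : Fin d}
    {L : NNReal} {g : (Fin d → ℝ) → ℝ} (hg : LipschitzWith L g)
    (hchart : ∀ x ∈ V, (x ∈ Ω ↔ g (fun i => if i = j then 0 else φ x i) < φ x j))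
    {q : EuclideanSpace ℝ (Fin d)} (hq : q ∈ frontier Ω) (hqV : q ∈ V) :
    g (fun i => if i = j then 0 else φ q i) = φ q j := by
  have hgz : Continuous fun z : EuclideanSpace ℝ (Fin d) =>
      g (fun i => if i = j then 0 else φ z i) := by
    apply hg.continuous.comp
    apply continuous_pi
    intro i
    by_cases hij : i = j
    · simp only [hij, if_pos rfl]; exact continuous_const
    · simp only [if_neg hij]
      exact (EuclideanSpace.proj (𝕜 := ℝ) i).continuous.comp φ.continuous
  have hFc : Continuous fun z : EuclideanSpace ℝ (Fin d) =>
      φ z j - g (fun i => if i = j then 0 else φ z i) :=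
    ((EuclideanSpace.proj (𝕜 := ℝ) j).continuous.comp φ.continuous).sub hgz
  have hqnot : q ∉ Ω := by
    intro hqΩ
    have := hΩo.inter_frontier_eq
    exact absurd (Set.mem_inter hqΩ hq) (by rw [this]; exact Set.notMem_empty q)
  have h1 : φ q j ≤ g (fun i => if i = j then 0 else φ q i) := by
    by_contra h
    push_neg at h
    exact hqnot ((hchart q hqV).mpr h)
  have h2 : g (fun i => if i = j then 0 else φ q i) ≤ φ q j := by
    by_contra h
    push_neg at h
    set O := (fun z : EuclideanSpace ℝ (Fin d) =>
      φ z j - g (fun i => if i = j then 0 else φ z i)) ⁻¹' Set.Iio 0 with hO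
    have hOopen : IsOpen O := hFc.isOpen_preimage _ isOpen_Iio
    have hqO : q ∈ O := by
      simp only [hO, Set.mem_preimage, Set.mem_Iio]
      linarith
    have hqcl : q ∈ closure Ω := frontier_subset_closure hq
    rw [mem_closure_iff] at hqcl
    obtain ⟨z, ⟨hzO, hzV⟩, hzΩ⟩ := hqcl (O ∩ V) (hOopen.inter hV) ⟨hqO, hqV⟩
    have := (hchart z hzV).mp hzΩ
    simp only [hO, Set.mem_preimage, Set.mem_Iio] at hzO
    linarith
  linarith


lemma frontier_nbhd_volume_bound {n : ℕ} {Ω : Set (EuclideanSpace ℝ (Fin (n+1)))}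
    (hΩ : IsLipschitzDomain (n+1) Ω) :
    ∃ K : ℝ≥0∞, K ≠ ∞ ∧ ∀ δ : ℝ, 0 < δ → δ ≤ 2 →
      volume {z : EuclideanSpace ℝ (Fin (n+1)) | Metric.infDist z (frontier Ω) ≤ δ}
        ≤ K * ENNReal.ofReal δ := by
  obtain ⟨hΩo, hΩconn, hΩb, hcharts⟩ := hΩ
  set F := frontier Ω with hF
  -- F is compact and nonempty
  have hFcl : IsClosed F := isClosed_frontier
  have hFb : Bornology.IsBounded F :=
    hΩb.closure.subset frontier_subset_closure
  have hFc : IsCompact F := Metric.isCompact_of_isClosed_isBounded hFcl hFb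
  have hFne : F.Nonempty := by
    rw [hF, nonempty_frontier_iff]
    refine ⟨hΩconn.nonempty, ?_⟩
    intro hu
    obtain ⟨R, hR⟩ := hΩb.subset_closedBall 0
    have h1 : (EuclideanSpace.single 0 (|R| + 1) : EuclideanSpace ℝ (Fin (n+1))) ∈ Ω := by
      rw [hu]; trivial
    have h2 := hR h1
    rw [Metric.mem_closedBall, dist_zero_right, EuclideanSpace.norm_single] at h2
    rw [Real.norm_eq_abs, abs_of_pos (by positivity)] at h2
    cases abs_cases R <;> linarith
  -- local chart data with radii
  have key : ∀ p ∈ F, ∃ r > 0, ∃ K : ℝ≥0∞, K ≠ ∞ ∧ ∀ δ : ℝ, 0 < δ → δ ≤ r →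
      volume {z : EuclideanSpace ℝ (Fin (n+1)) |
        ∃ q ∈ F ∩ Metric.ball p r, dist z q ≤ δ} ≤ K * ENNReal.ofReal δ := by
    intro p hp
    obtain ⟨U, hU, φ, j, L, g, hg, hchart⟩ := hcharts p hp
    set V := interior U with hV
    have hVopen : IsOpen V := isOpen_interior
    have hpV : p ∈ V := mem_interior_iff_mem_nhds.mpr hU
    have hchartV : ∀ x ∈ V, (x ∈ Ω ↔ g (fun i => if i = j then 0 else φ x i) < φ x j) :=
      fun x hx => hchart x (interior_subset hx)
    obtain ⟨r, hr, hball⟩ := Metric.isOpen_iff.mp hVopen p hpV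
    refine ⟨r, hr, ENNReal.ofReal (2*(1+L)) * ENNReal.ofReal (2*(2*r)) ^ n, ?_, ?_⟩
    · exact ENNReal.mul_ne_top ENNReal.ofReal_ne_top (by
        exact ENNReal.pow_ne_top ENNReal.ofReal_ne_top)
    intro δ hδ hδr
    have hsub : {z : EuclideanSpace ℝ (Fin (n+1)) | ∃ q ∈ F ∩ Metric.ball p r, dist z q ≤ δ}
        ⊆ {z : EuclideanSpace ℝ (Fin (n+1)) |
            dist z p ≤ 2*r ∧ |φ z j - g (fun i => if i = j then 0 else φ z i)| ≤ (1+L)*δ} := by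
      rintro z ⟨q, ⟨hqF, hqb⟩, hzq⟩
      have hgq : g (fun i => if i = j then 0 else φ q i) = φ q j :=
        frontier_graph_eq hΩo hVopen hg hchartV hqF (hball hqb)
      constructor
      · calc dist z p ≤ dist z q + dist q p := dist_triangle z q p
          _ ≤ δ + r := add_le_add hzq (le_of_lt (Metric.mem_ball.mp hqb))
          _ ≤ 2*r := by linarith
      · have hcoord : |φ z j - φ q j| ≤ dist z q := by
          calc |φ z j - φ q j| = dist (φ z j) (φ q j) := (Real.dist_eq _ _).symm
            _ ≤ dist (φ z) (φ q) := coord_dist_le _ _ _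
            _ = dist z q := φ.dist_eq z q
        have hgdist : |g (fun i => if i = j then 0 else φ z i)
            - g (fun i => if i = j then 0 else φ q i)| ≤ L * dist z q := by
          have hLip := hg.dist_le_mul (fun i => if i = j then 0 else φ z i)
            (fun i => if i = j then 0 else φ q i)
          rw [Real.dist_eq] at hLip
          refine le_trans hLip (mul_le_mul_of_nonneg_left ?_ L.coe_nonneg)
          rw [dist_pi_le_iff dist_nonneg]
          intro i
          by_cases hij : i = j
          · simp [hij, dist_nonneg]
          · simp only [if_neg hij]
            calc dist (φ z i) (φ q i) ≤ dist (φ z) (φ q) := coord_dist_le _ _ _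
              _ = dist z q := φ.dist_eq z q
        calc |φ z j - g (fun i => if i = j then 0 else φ z i)|
            = |(φ z j - φ q j) + (g (fun i => if i = j then 0 else φ q i)
                - g (fun i => if i = j then 0 else φ z i))| := by rw [hgq]; ring_nf
          _ ≤ |φ z j - φ q j| + |g (fun i => if i = j then 0 else φ q i)
                - g (fun i => if i = j then 0 else φ z i)| := abs_add_le _ _
          _ ≤ dist z q + L * dist z q := by
              refine add_le_add hcoord ?_
              rw [abs_sub_comm]
              exact hgdist
          _ ≤ (1+L) * δ := by
              have hL : (0:ℝ) ≤ L := L.coe_nonneg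
              nlinarith
    calc volume {z : EuclideanSpace ℝ (Fin (n+1)) | ∃ q ∈ F ∩ Metric.ball p r, dist z q ≤ δ}
        ≤ volume {z : EuclideanSpace ℝ (Fin (n+1)) |
            dist z p ≤ 2*r ∧ |φ z j - g (fun i => if i = j then 0 else φ z i)| ≤ (1+L)*δ} :=
          measure_mono hsub
      _ ≤ ENNReal.ofReal (2*((1+L)*δ)) * ENNReal.ofReal (2*(2*r)) ^ n :=
          tube_volume j L g hg φ p (2*r) ((1+L)*δ)
      _ = ENNReal.ofReal (2*(1+L)) * ENNReal.ofReal (2*(2*r)) ^ n * ENNReal.ofReal δ := by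
          rw [show (2*((1+(L:ℝ))*δ)) = (2*(1+(L:ℝ)))*δ by ring,
            ENNReal.ofReal_mul (by positivity)]
          ring
  choose! r hr Kp hKp hKbound using key
  -- finite subcover
  have hcover : F ⊆ ⋃ p ∈ F, Metric.ball p (r p) := by
    intro p hp
    exact Set.mem_biUnion hp (Metric.mem_ball_self (hr p hp))
  obtain ⟨t, htF, htfin, htcover⟩ := hFc.elim_finite_subcover_image
    (fun p _ => Metric.isOpen_ball) hcover
  classical
  set ts := htfin.toFinset with hts
  have htsF : ∀ p ∈ ts, p ∈ F := by intro p hp; exact htF (htfin.mem_toFinset.mp hp)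
  have htsne : ts.Nonempty := by
    obtain ⟨q0, hq0⟩ := hFne
    have := htcover hq0
    rw [Set.mem_iUnion₂] at this
    obtain ⟨p, hpt, _⟩ := this
    exact ⟨p, htfin.mem_toFinset.mpr hpt⟩
  set r0 : ℝ := min 1 (ts.inf' htsne r) with hr0
  have hr0pos : 0 < r0 := by
    apply lt_min one_pos
    rw [Finset.lt_inf'_iff]
    intro p hp
    exact hr p (htsF p hp)
  have hr0le : ∀ p ∈ ts, r0 ≤ r p := by
    intro p hp
    exact le_trans (min_le_right _ _) (Finset.inf'_le r hp)
  -- bounded global volume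
  obtain ⟨R, hR⟩ := hFb.subset_closedBall 0
  set M : ℝ≥0∞ := volume (Metric.closedBall (0:EuclideanSpace ℝ (Fin (n+1))) (R+2)) with hM
  have hMfin : M ≠ ∞ := (isCompact_closedBall _ _).measure_lt_top.ne
  set K : ℝ≥0∞ := (∑ p ∈ ts, Kp p) + M / ENNReal.ofReal r0 with hK
  have hKfin : K ≠ ∞ := by
    apply ENNReal.add_ne_top.mpr
    constructor
    · exact (ENNReal.sum_lt_top.mpr (fun p hp => (hKp p (htsF p hp)).lt_top)).ne
    · exact (ENNReal.div_lt_top hMfin (by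
        simp [ENNReal.ofReal_eq_zero]; linarith)).ne
  refine ⟨K, hKfin, ?_⟩
  intro δ hδ hδ2
  by_cases hcase : δ ≤ r0
  · -- small δ: use the tubes
    have hWsub : {z : EuclideanSpace ℝ (Fin (n+1)) | Metric.infDist z F ≤ δ}
        ⊆ ⋃ p ∈ ts, {z : EuclideanSpace ℝ (Fin (n+1)) |
            ∃ q ∈ F ∩ Metric.ball p (r p), dist z q ≤ δ} := by
      intro z hz
      obtain ⟨q, hqF, hqd⟩ := hFc.exists_infDist_eq_dist hFne z
      have hzq : dist z q ≤ δ := by rw [← hqd]; exact hz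
      have := htcover hqF
      rw [Set.mem_iUnion₂] at this
      obtain ⟨p, hpt, hpq⟩ := this
      rw [Set.mem_iUnion₂]
      exact ⟨p, htfin.mem_toFinset.mpr hpt, q, ⟨hqF, hpq⟩, hzq⟩
    calc volume {z : EuclideanSpace ℝ (Fin (n+1)) | Metric.infDist z F ≤ δ}
        ≤ ∑ p ∈ ts, volume {z : EuclideanSpace ℝ (Fin (n+1)) |
            ∃ q ∈ F ∩ Metric.ball p (r p), dist z q ≤ δ} :=
          le_trans (measure_mono hWsub) (measure_biUnion_finset_le ts _)
      _ ≤ ∑ p ∈ ts, Kp p * ENNReal.ofReal δ := by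
          apply Finset.sum_le_sum
          intro p hp
          exact hKbound p (htsF p hp) δ hδ (le_trans hcase (hr0le p hp))
      _ = (∑ p ∈ ts, Kp p) * ENNReal.ofReal δ := by rw [Finset.sum_mul]
      _ ≤ K * ENNReal.ofReal δ := by
          apply mul_le_mul_left
          rw [hK]
          exact le_self_add
  · -- large δ: use global bound
    push_neg at hcase
    have hWsub : {z : EuclideanSpace ℝ (Fin (n+1)) | Metric.infDist z F ≤ δ}
        ⊆ Metric.closedBall (0:EuclideanSpace ℝ (Fin (n+1))) (R+2) := by
      intro z hz
      obtain ⟨q, hqF, hqd⟩ := hFc.exists_infDist_eq_dist hFne z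
      have hzq : dist z q ≤ δ := by rw [← hqd]; exact hz
      have hqR := hR hqF
      rw [Metric.mem_closedBall] at hqR ⊢
      calc dist z 0 ≤ dist z q + dist q 0 := dist_triangle _ _ _
        _ ≤ δ + R := add_le_add hzq hqR
        _ ≤ R + 2 := by linarith
    have h1 : volume {z : EuclideanSpace ℝ (Fin (n+1)) | Metric.infDist z F ≤ δ} ≤ M :=
      measure_mono hWsub
    have h2 : M ≤ (M / ENNReal.ofReal r0) * ENNReal.ofReal δ := by
      have hr0ne : ENNReal.ofReal r0 ≠ 0 := by
        simp [ENNReal.ofReal_eq_zero]; linarith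
      calc M = (M / ENNReal.ofReal r0) * ENNReal.ofReal r0 :=
            (ENNReal.div_mul_cancel hr0ne ENNReal.ofReal_ne_top).symm
        _ ≤ (M / ENNReal.ofReal r0) * ENNReal.ofReal δ := by
            apply mul_le_mul_right
            exact ENNReal.ofReal_le_ofReal hcase.le
    calc volume {z : EuclideanSpace ℝ (Fin (n+1)) | Metric.infDist z F ≤ δ}
        ≤ (M / ENNReal.ofReal r0) * ENNReal.ofReal δ := le_trans h1 h2
      _ ≤ K * ENNReal.ofReal δ := by
          apply mul_le_mul_left
          rw [hK]
          exact le_add_self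


/-- For a bounded Lipschitz domain `Ω ∋ 0` in `ℝ^d`, `d ≥ 2`, there is a
constant `C > 0` such that `#∂Ω_ε ≤ C ε^{1-d}` for all `ε ∈ (0,1)`. -/
theorem discrete_inner_boundary_card_bound
    (d : ℕ) (hd : 2 ≤ d) (Ω : Set (EuclideanSpace ℝ (Fin d)))
    (hΩ : IsLipschitzDomain d Ω) (h0 : (0 : EuclideanSpace ℝ (Fin d)) ∈ Ω) :
    ∃ C > (0:ℝ), ∀ ε ∈ Set.Ioo (0:ℝ) 1,
      ((innerBdry Ω ε).ncard : ℝ) ≤ C * ε ^ ((1:ℝ) - d) := by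
  obtain ⟨n, rfl⟩ : ∃ n, d = n + 1 := ⟨d - 1, by omega⟩
  have hΩo : IsOpen Ω := hΩ.1
  obtain ⟨K, hKfin, hKb⟩ := frontier_nbhd_volume_bound hΩ
  set c : ℝ≥0∞ := volume (Metric.ball (0 : EuclideanSpace ℝ (Fin (n+1))) 1) with hc
  have hcpos : 0 < c := Metric.measure_ball_pos volume 0 one_pos
  have hcfin : c ≠ ∞ := measure_ball_lt_top.ne
  have hcT : 0 < c.toReal := ENNReal.toReal_pos hcpos.ne' hcfin
  have hKT : 0 ≤ K.toReal := ENNReal.toReal_nonneg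
  set C : ℝ := 3 * K.toReal * 2^(n+1) / c.toReal + 1 with hC
  have hCpos : 0 < C := by
    rw [hC]
    positivity
  refine ⟨C, hCpos, ?_⟩
  rintro ε ⟨hε0, hε1⟩
  have hrpow : ε ^ ((1:ℝ) - ((n+1 : ℕ):ℝ)) = ε / ε^(n+1) := by
    rw [Real.rpow_sub hε0, Real.rpow_one, Real.rpow_natCast]
  have hεpow : 0 < ε ^ (n+1) := by positivity
  by_cases hfin : (innerBdry Ω ε).Finite
  swap
  · rw [Set.Infinite.ncard hfin]
    rw [Nat.cast_zero]
    have := Real.rpow_pos_of_pos hε0 ((1:ℝ) - ((n+1 : ℕ):ℝ))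
    nlinarith
  · set s := hfin.toFinset with hs
    have hN : (innerBdry Ω ε).ncard = s.card := Set.ncard_eq_toFinset_card _ hfin
    set N : ℕ := s.card with hNdef
    have hmem : ∀ x ∈ s, x ∈ innerBdry Ω ε := fun x hx => hfin.mem_toFinset.mp hx
    have hlat : ∀ x ∈ s, x ∈ latticePts (n+1) ε := fun x hx => (hmem x hx).1.2
    -- disjoint balls
    have hdisj : (↑s : Set (EuclideanSpace ℝ (Fin (n+1)))).PairwiseDisjoint
        (fun x => Metric.ball x (ε/2)) := by
      intro x hx y hy hxy
      apply Metric.ball_disjoint_ball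
      have := lattice_sep hε0 (hlat x (by simpa using hx)) (hlat y (by simpa using hy)) hxy
      linarith
    -- union inside neighborhood of frontier
    have hsub : (⋃ x ∈ s, Metric.ball x (ε/2)) ⊆
        {z : EuclideanSpace ℝ (Fin (n+1)) | Metric.infDist z (frontier Ω) ≤ 3*ε/2} := by
      intro z hz
      rw [Set.mem_iUnion₂] at hz
      obtain ⟨x, hx, hzx⟩ := hz
      rw [Metric.mem_ball] at hzx
      have h1 : Metric.infDist x (frontier Ω) ≤ ε :=
        innerBdry_near_frontier hΩo hε0 (hmem x hx)
      have h2 : Metric.infDist z (frontier Ω) ≤ Metric.infDist x (frontier Ω) + dist z x :=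
        Metric.infDist_le_infDist_add_dist
      simp only [Set.mem_setOf_eq]
      linarith
    -- volume of each ball
    have hball : ∀ x : EuclideanSpace ℝ (Fin (n+1)),
        volume (Metric.ball x (ε/2)) = ENNReal.ofReal ((ε/2)^(n+1)) * c := by
      intro x
      rw [Measure.addHaar_ball volume x (by positivity : (0:ℝ) ≤ ε/2)]
      congr 2
      rw [finrank_euclideanSpace_fin]
    -- main volume inequality
    have hmainE : (N : ℝ≥0∞) * (ENNReal.ofReal ((ε/2)^(n+1)) * c)
        ≤ K * ENNReal.ofReal (3*ε/2) := by
      calc (N : ℝ≥0∞) * (ENNReal.ofReal ((ε/2)^(n+1)) * c)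
          = ∑ x ∈ s, volume (Metric.ball x (ε/2)) := by
            rw [Finset.sum_congr rfl (fun x _ => hball x), Finset.sum_const, hNdef]
            simp [nsmul_eq_mul]
        _ = volume (⋃ x ∈ s, Metric.ball x (ε/2)) :=
            (measure_biUnion_finset hdisj (fun x _ => measurableSet_ball)).symm
        _ ≤ volume {z : EuclideanSpace ℝ (Fin (n+1)) |
              Metric.infDist z (frontier Ω) ≤ 3*ε/2} := measure_mono hsub
        _ ≤ K * ENNReal.ofReal (3*ε/2) := hKb (3*ε/2) (by linarith) (by linarith)
    -- to real numbers
    have hRfin : K * ENNReal.ofReal (3*ε/2) ≠ ∞ :=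
      ENNReal.mul_ne_top hKfin ENNReal.ofReal_ne_top
    have hmainR := ENNReal.toReal_mono hRfin hmainE
    rw [ENNReal.toReal_mul, ENNReal.toReal_mul, ENNReal.toReal_mul, ENNReal.toReal_natCast,
      ENNReal.toReal_ofReal (by positivity), ENNReal.toReal_ofReal (by positivity)] at hmainR
    -- algebra
    have hpow2 : ((ε/2)^(n+1) : ℝ) * 2^(n+1) = ε^(n+1) := by
      rw [div_pow]
      field_simp
    have hmain2 : (N : ℝ) * ε^(n+1) * c.toReal ≤ K.toReal * (3*ε/2) * 2^(n+1) := by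
      have := mul_le_mul_of_nonneg_right hmainR (by positivity : (0:ℝ) ≤ 2^(n+1))
      calc (N : ℝ) * ε^(n+1) * c.toReal
          = (N : ℝ) * ((ε/2)^(n+1) * c.toReal) * 2^(n+1) := by
            rw [← hpow2]; ring
        _ ≤ K.toReal * (3*ε/2) * 2^(n+1) := this
    have hdiv : (N : ℝ) * ε^(n+1) ≤ (3 * K.toReal * 2^(n+1) / c.toReal) * ε := by
      rw [div_mul_eq_mul_div, le_div_iff₀ hcT]
      nlinarith [mul_nonneg (mul_nonneg hKT hε0.le) (by positivity : (0:ℝ) ≤ (2:ℝ)^(n+1))]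
    rw [hN, hrpow, ← mul_div_assoc, le_div_iff₀ hεpow]
    have hCε : C * ε = (3 * K.toReal * 2^(n+1) / c.toReal) * ε + ε := by rw [hC]; ring
    clear_value C c N
    linarith [hdiv, hε0.le, hCε]


end
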